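/- Under the assumptions of the penalized loss L_{X,y}(f) = g(SSR_{X,y}(f)) + PEN((coeff_d f)_{d∈G}) with G a set of maximal exponent vectors of the model support I, suppose the family F of admissible polynomials (those with support in I) is closed under translations, i.e., f ∈ F and P ∈ ℝ^p implies T_P(f) ∈ F. If f* minimizes L_{X,y} over F, then T_{−P}(f*) minimizes L_{T_P(X), y} over F, and the resulting fitted function is unchanged: (T_{−P}(f*))(x + P) = f*(x) for all x ∈ ℝ^p. -/

import Mathlib

open MvPolynomial

/-- Translation of a polynomial: substitution `X i ↦ X i + C (P i)`. -/
noncomputable def T {p : ℕ} (P : Fin p → ℝ) :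
    MvPolynomial (Fin p) ℝ →ₐ[ℝ] MvPolynomial (Fin p) ℝ :=
  aeval (fun i => X i + C (P i))

/-- Sum of squared residuals. -/
noncomputable def SSR {n p : ℕ} (X : Fin n → Fin p → ℝ) (y : Fin n → ℝ)
    (f : MvPolynomial (Fin p) ℝ) : ℝ :=
  ∑ j, (y j - eval (X j) f) ^ 2

/-- Evaluating a translated polynomial. -/
lemma eval_T {p : ℕ} (Q : Fin p → ℝ) (f : MvPolynomial (Fin p) ℝ) (x : Fin p → ℝ) :
    eval x (T Q f) = eval (fun i => x i + Q i) f := by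
  induction f using MvPolynomial.induction_on with
  | C a => simp [T]
  | add f g hf hg => simp only [map_add, hf, hg]
  | mul_X f i hf =>
    simp only [map_mul, hf]
    simp [T]

/-- Coefficients of a power of `X i + C q`. -/
lemma coeff_binom_pow {p : ℕ} (i : Fin p) (q : ℝ) (k : ℕ) :
    (∀ d, coeff d ((X i + C q : MvPolynomial (Fin p) ℝ) ^ k) ≠ 0 → d ≤ Finsupp.single i k) ∧
    coeff (Finsupp.single i k) ((X i + C q : MvPolynomial (Fin p) ℝ) ^ k) = 1 := by
  classical
  have hexp : (X i + C q : MvPolynomial (Fin p) ℝ) ^ k =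
      ∑ m ∈ Finset.range (k + 1), C (q ^ (k - m) * (k.choose m : ℝ)) * X i ^ m := by
    rw [add_pow]
    refine Finset.sum_congr rfl fun m _ => ?_
    rw [← C_pow, map_mul, C_eq_coe_nat]
    ring
  constructor
  · intro d hd
    rw [hexp, coeff_sum] at hd
    obtain ⟨m, hm, hne⟩ := Finset.exists_ne_zero_of_sum_ne_zero hd
    rw [coeff_C_mul, coeff_X_pow] at hne
    have hd' : Finsupp.single i m = d := by
      by_contra h; simp [h] at hne
    subst hd'
    have hmk : m ≤ k := by simp at hm; omega
    intro j
    by_cases h : i = j <;> simp [Finsupp.single_apply, h, hmk]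
  · rw [hexp, coeff_sum]
    rw [Finset.sum_eq_single k]
    · simp [coeff_C_mul, coeff_X_pow]
    · intro m hm hmk
      rw [coeff_C_mul, coeff_X_pow, if_neg, mul_zero]
      intro h
      have := congrArg (fun f => f i) h
      simp at this
      exact hmk this
    · intro h; simp at h

/-- Coefficients of a product of translated variable powers. -/
lemma coeff_prod_translate {p : ℕ} (Q : Fin p → ℝ) (s : Finset (Fin p)) :
    ∀ (e : Fin p →₀ ℕ), e.support ⊆ s →
    (∀ d, coeff d (∏ i ∈ s, (X i + C (Q i) : MvPolynomial (Fin p) ℝ) ^ (e i)) ≠ 0 → d ≤ e) ∧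
    coeff e (∏ i ∈ s, (X i + C (Q i) : MvPolynomial (Fin p) ℝ) ^ (e i)) = 1 := by
  classical
  induction s using Finset.induction_on with
  | empty =>
    intro e he
    have he0 : e = 0 := by
      ext j
      by_contra h
      exact absurd (he (Finsupp.mem_support_iff.mpr h)) (Finset.notMem_empty j)
    subst he0
    constructor
    · intro d hd
      simp only [Finset.prod_empty] at hd
      rw [coeff_one] at hd
      by_contra
      have : (0 : Fin p →₀ ℕ) = d := by by_contra h; simp [h] at hd
      subst this; simp at *
    · simp
  | @insert i s his ih =>
    intro e he
    set e' : Fin p →₀ ℕ := e.erase i with he'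
    have he's : e'.support ⊆ s := by
      intro j hj
      rw [Finsupp.support_erase, Finset.mem_erase] at hj
      rcases Finset.mem_insert.mp (he hj.2) with h | h
      · exact absurd h hj.1
      · exact h
    have hprod : ∏ j ∈ s, (X j + C (Q j) : MvPolynomial (Fin p) ℝ) ^ (e j)
        = ∏ j ∈ s, (X j + C (Q j) : MvPolynomial (Fin p) ℝ) ^ (e' j) := by
      refine Finset.prod_congr rfl fun j hj => ?_
      have : j ≠ i := fun h => his (h ▸ hj)
      rw [he', Finsupp.erase_ne this]
    have hsplit : e = Finsupp.single i (e i) + e' := by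
      ext j
      by_cases h : j = i
      · subst h; simp [he']
      · simp [he', Finsupp.single_apply, Ne.symm h, Finsupp.erase_ne h]
    obtain ⟨iha, ihb⟩ := ih e' he's
    rw [Finset.prod_insert his, hprod]
    obtain ⟨ba, bb⟩ := coeff_binom_pow i (Q i) (e i)
    constructor
    · intro d hd
      rw [coeff_mul] at hd
      obtain ⟨⟨a, b⟩, hab, hne⟩ := Finset.exists_ne_zero_of_sum_ne_zero hd
      rw [Finset.HasAntidiagonal.mem_antidiagonal] at hab
      have h1 : a ≤ Finsupp.single i (e i) := ba a (fun h => hne (by simp [h]))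
      have h2 : b ≤ e' := iha b (fun h => hne (by simp [h]))
      rw [← hab, hsplit]
      exact add_le_add h1 h2
    · rw [coeff_mul]
      rw [Finset.sum_eq_single (Finsupp.single i (e i), e')]
      · rw [bb, ihb]; norm_num
      · rintro ⟨a, b⟩ hab hne
        rw [Finset.HasAntidiagonal.mem_antidiagonal] at hab
        by_contra hterm
        have ha0 : coeff a ((X i + C (Q i) : MvPolynomial (Fin p) ℝ) ^ (e i)) ≠ 0 := by
          intro h; simp [h] at hterm
        have hb0 : coeff b (∏ j ∈ s, (X j + C (Q j) : MvPolynomial (Fin p) ℝ) ^ (e' j)) ≠ 0 := by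
          intro h; simp [h] at hterm
        have h1 := ba a ha0
        have h2 := iha b hb0
        have : a = Finsupp.single i (e i) ∧ b = e' := by
          constructor <;> ext j <;>
          · have h3 : a j + b j = e j := by rw [← Finsupp.add_apply, hab]
            have h4 : (Finsupp.single i (e i)) j + e' j = e j := by
              rw [← Finsupp.add_apply, ← hsplit]
            have := h1 j; have := h2 j
            omega
        exact hne (by rw [this.1, this.2])
      · intro h
        exact absurd (Finset.HasAntidiagonal.mem_antidiagonal.mpr hsplit.symm) h

/-- Translation does not change the coefficient at an exponent that is maximal
over the support of the polynomial. -/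
lemma coeff_T_maximal {p : ℕ} (Q : Fin p → ℝ) (f : MvPolynomial (Fin p) ℝ)
    (d : Fin p →₀ ℕ) (hmax : ∀ e ∈ f.support, d ≤ e → e = d) :
    coeff d (T Q f) = coeff d f := by
  classical
  conv_lhs => rw [f.as_sum]
  rw [map_sum, coeff_sum]
  have hterm : ∀ e ∈ f.support,
      coeff d (T Q (monomial e (coeff e f))) = if e = d then coeff d f else 0 := by
    intro e hesupp
    rw [T, aeval_monomial]
    have : (Finsupp.prod e fun n k => (X n + C (Q n) : MvPolynomial (Fin p) ℝ) ^ k)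
        = ∏ i ∈ e.support, (X i + C (Q i) : MvPolynomial (Fin p) ℝ) ^ (e i) := rfl
    rw [this]
    obtain ⟨pa, pb⟩ := coeff_prod_translate Q e.support e (subset_refl _)
    have halg : (algebraMap ℝ (MvPolynomial (Fin p) ℝ)) (coeff e f) = C (coeff e f) := rfl
    rw [halg, coeff_C_mul]
    by_cases h : e = d
    · subst h; rw [pb, mul_one, if_pos rfl]
    · rw [if_neg h]
      by_cases h0 : coeff d (∏ i ∈ e.support, (X i + C (Q i) : MvPolynomial (Fin p) ℝ) ^ (e i)) = 0
      · rw [h0, mul_zero]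
      · exact absurd (hmax e hesupp (pa d h0)) h
  rw [Finset.sum_congr rfl hterm]
  by_cases hd : d ∈ f.support
  · rw [Finset.sum_ite_eq' f.support d (fun _ => coeff d f), if_pos hd]
  · rw [Finset.sum_ite_of_false, Finset.sum_const_zero]
    · exact (notMem_support_iff.mp hd).symm
    · intro e he; exact fun h => hd (h ▸ he)

/-- If `f*` minimizes the penalized loss `g(SSR_{X,y}(·)) + PEN` (with penalty depending
only on coefficients indexed by a set `G` of maximal elements of the model support `I`)
over the translation-closed family `F` of polynomials supported in `I`, then `T (-P) f*`
minimizes the loss for the translated data, and the fitted function is unchanged: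
`(T (-P) f*)(x + P) = f*(x)` for all `x`. -/
theorem penalized_minimizer_translation {n p : ℕ}
    (X : Fin n → Fin p → ℝ) (y : Fin n → ℝ)
    (g : ℝ → ℝ) (I : Set (Fin p →₀ ℕ)) (G : Set (Fin p →₀ ℕ))
    (PEN : (G → ℝ) → ℝ)
    (hGI : G ⊆ I)
    (hGmax : ∀ d ∈ G, ∀ e ∈ I, d ≤ e → e = d)
    (F : Set (MvPolynomial (Fin p) ℝ))
    (hFI : F = {f | ↑f.support ⊆ I})
    (hFclosed : ∀ f ∈ F, ∀ Q : Fin p → ℝ, T Q f ∈ F)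
    (fstar : MvPolynomial (Fin p) ℝ) (hfstar : fstar ∈ F)
    (hmin : ∀ f ∈ F,
      g (SSR X y fstar) + PEN (fun d => coeff d.1 fstar) ≤
        g (SSR X y f) + PEN (fun d => coeff d.1 f))
    (P : Fin p → ℝ) :
    T (-P) fstar ∈ F ∧
    (∀ f ∈ F,
      g (SSR (fun j => X j + P) y (T (-P) fstar)) +
          PEN (fun d => coeff d.1 (T (-P) fstar)) ≤
        g (SSR (fun j => X j + P) y f) + PEN (fun d => coeff d.1 f)) ∧
    (∀ x : Fin p → ℝ, eval (x + P) (T (-P) fstar) = eval x fstar) := by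
  have hcoeff : ∀ f ∈ F, ∀ (Q : Fin p → ℝ) (d : G), coeff d.1 (T Q f) = coeff d.1 f := by
    intro f hf Q d
    apply coeff_T_maximal
    intro e he hde
    have heI : e ∈ I := by
      rw [hFI] at hf
      exact hf he
    exact hGmax d.1 d.2 e heI hde
  have key3 : ∀ x : Fin p → ℝ, eval (x + P) (T (-P) fstar) = eval x fstar := by
    intro x
    rw [eval_T]
    have : (fun i => (x + P) i + (-P) i) = x := by funext i; simp
    rw [this]
  refine ⟨hFclosed fstar hfstar (-P), ?_, key3⟩
  intro f hf
  have hSSRstar : SSR (fun j => X j + P) y (T (-P) fstar) = SSR X y fstar := by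
    unfold SSR
    exact Finset.sum_congr rfl fun j _ => by rw [key3 (X j)]
  have hSSRf : SSR X y (T P f) = SSR (fun j => X j + P) y f := by
    unfold SSR
    refine Finset.sum_congr rfl fun j _ => ?_
    rw [eval_T]
    rfl
  have hPENstar : (fun d : G => coeff d.1 (T (-P) fstar)) = fun d : G => coeff d.1 fstar := by
    funext d
    exact hcoeff fstar hfstar (-P) d
  have hPENf : (fun d : G => coeff d.1 (T P f)) = fun d : G => coeff d.1 f := by
    funext d
    exact hcoeff f hf P d
  have h := hmin (T P f) (hFclosed f hf P)
  rw [hSSRf, hPENf] at h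
  rw [hSSRstar, hPENstar]
  exact h
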